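/- Let (X,d,μ) be a metric measure space with μ Borel regular and doubling with constant C_μ, admitting a p-Poincaré inequality with constant L ≥ 1 for some p ≥ 1. Let X̄ be the metric completion of X and let μ̄ be the Borel measure on X̄ defined by μ̄(Y) = μ(Y ∩ X). Then μ̄ is doubling and (X̄, d, μ̄) admits a p-Poincaré inequality, with constants depending only on C_μ, L and p. -/

import Mathlib

open Metric MeasureTheory Filter Set
open scoped NNReal ENNReal

/-- The variation of `f` on the ball `B(x,r)`: `sup { |f y - f x| / r : y ∈ B(x,r) }`. -/
noncomputable def varBall {X : Type*} [MetricSpace X] (f : X → ℝ) (x : X) (r : ℝ) : ℝ :=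
  sSup ((fun y => |f y - f x| / r) '' Metric.ball x r)

/-- Lower pointwise Lipschitz constant `lip_x f`. -/
noncomputable def lipLow {X : Type*} [MetricSpace X] (f : X → ℝ) (x : X) : ℝ :=
  Filter.liminf (fun r => varBall f x r) (nhdsWithin 0 (Set.Ioi (0:ℝ)))

/-- Upper pointwise Lipschitz constant `Lip_x f`. -/
noncomputable def lipUp {X : Type*} [MetricSpace X] (f : X → ℝ) (x : X) : ℝ :=
  Filter.limsup (fun r => varBall f x r) (nhdsWithin 0 (Set.Ioi (0:ℝ)))

/-- `f` is a real-valued Lipschitz function. -/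
def IsLip {X : Type*} [MetricSpace X] (f : X → ℝ) : Prop := ∃ K : ℝ≥0, LipschitzWith K f

/-- `μ` is doubling with constant `C`. -/
def DoublingWith {X : Type*} [MetricSpace X] [MeasurableSpace X] (μ : Measure X) (C : ℝ≥0) :
    Prop :=
  ∀ (x : X) (r : ℝ), 0 < r → μ (Metric.ball x (2 * r)) ≤ (C : ℝ≥0∞) * μ (Metric.ball x r)

/-- `(X, μ)` admits a `p`-Poincaré inequality with constant `L`. -/
def PoincareIneq {X : Type*} [MetricSpace X] [MeasurableSpace X] (μ : Measure X) (p L : ℝ) :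
    Prop :=
  (∀ (x : X) (r : ℝ), 0 < r → 0 < μ (Metric.ball x r) ∧ μ (Metric.ball x r) < ⊤) ∧
  ∀ f : X → ℝ, IsLip f → ∀ (x : X) (r : ℝ), 0 < r →
    ⨍ y in Metric.ball x r, |f y - ⨍ z in Metric.ball x r, f z ∂μ| ∂μ ≤
      L * r * (⨍ z in Metric.ball x (L * r), (lipLow f z) ^ p ∂μ) ^ (1 / p)

/-- An `N`-tuple of functions is dependent to first order at `x`. -/
def DependentAt {X : Type*} [MetricSpace X] {N : ℕ} (f : Fin N → X → ℝ) (x : X) : Prop :=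
  ∃ l : Fin N → ℝ, l ≠ 0 ∧ lipUp (fun y => ∑ i, l i * f i y) x = 0

/-- A measurable differentiable structure of dimension at most `N₀`. -/
def HasMDS {X : Type*} [MetricSpace X] [MeasurableSpace X] (μ : Measure X) (N₀ : ℕ) : Prop :=
  ∃ (ι : Type) (_ : Countable ι) (U : ι → Set X) (N : ι → ℕ)
      (φ : (i : ι) → Fin (N i) → X → ℝ),
    (∀ i, MeasurableSet (U i) ∧ 0 < μ (U i)) ∧
    μ (Set.univ \ ⋃ i, U i) = 0 ∧
    (∀ i, N i ≤ N₀) ∧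
    (∀ i k, IsLip (φ i k)) ∧
    (∀ f : X → ℝ, IsLip f → ∀ i, ∃ df : X → (Fin (N i) → ℝ),
      Measurable df ∧
      (∀ᵐ x ∂(μ.restrict (U i)),
        lipUp (fun y => f y - ∑ k, df x k * φ i k y) x = 0) ∧
      ∀ dg : X → (Fin (N i) → ℝ), Measurable dg →
        (∀ᵐ x ∂(μ.restrict (U i)),
          lipUp (fun y => f y - ∑ k, dg x k * φ i k y) x = 0) →
        (∀ᵐ x ∂(μ.restrict (U i)), df x = dg x))


/-! ### Auxiliary lemmas -/

section VarAux
variable {X : Type*} [MetricSpace X] {f : X → ℝ} {K : ℝ≥0} {x y : X} {q r : ℝ}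

lemma varBall_img_nonempty (x : X) (hr : 0 < r) :
    ((fun y => |f y - f x| / r) '' Metric.ball x r).Nonempty :=
  ⟨0, ⟨x, mem_ball_self hr, by simp⟩⟩

lemma varBall_img_bddAbove (hf : LipschitzWith K f) (x : X) (hr : 0 < r) :
    BddAbove ((fun y => |f y - f x| / r) '' Metric.ball x r) := by
  refine ⟨K, ?_⟩
  rintro a ⟨y, hy, rfl⟩
  rw [div_le_iff₀ hr]
  calc |f y - f x| ≤ K * dist y x := by
        simpa [Real.dist_eq] using hf.dist_le_mul y x
    _ ≤ K * r := mul_le_mul_of_nonneg_left (le_of_lt (mem_ball.1 hy)) (by positivity)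

lemma varBall_nonneg (hf : LipschitzWith K f) (x : X) (r : ℝ) : 0 ≤ varBall f x r := by
  rcases le_or_gt r 0 with h | h
  · simp [varBall, ball_eq_empty.2 h, Real.sSup_empty]
  · exact le_csSup (varBall_img_bddAbove hf x h) ⟨x, mem_ball_self h, by simp⟩

lemma varBall_le (hf : LipschitzWith K f) (x : X) (hr : 0 < r) : varBall f x r ≤ K :=
  csSup_le (varBall_img_nonempty x hr) (fun a ha => by
    obtain ⟨y, hy, rfl⟩ := ha
    rw [div_le_iff₀ hr]
    calc |f y - f x| ≤ K * dist y x := by simpa [Real.dist_eq] using hf.dist_le_mul y x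
      _ ≤ K * r := mul_le_mul_of_nonneg_left (le_of_lt (mem_ball.1 hy)) (by positivity))

lemma le_varBall (hf : LipschitzWith K f) (hr : 0 < r) (hy : y ∈ ball x r) :
    |f y - f x| / r ≤ varBall f x r :=
  le_csSup (varBall_img_bddAbove hf x hr) ⟨y, hy, rfl⟩

lemma varBall_small_le (hf : LipschitzWith K f) (hq : 0 < q) (hqr : q ≤ r) :
    varBall f x q ≤ varBall f x r * (r / q) := by
  refine csSup_le (varBall_img_nonempty x hq) ?_
  rintro a ⟨z, hz, rfl⟩
  have hr : 0 < r := lt_of_lt_of_le hq hqr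
  have hz' : z ∈ ball x r := ball_subset_ball hqr hz
  have h1 : |f z - f x| / r ≤ varBall f x r := le_varBall hf hr hz'
  have heq : |f z - f x| / q = (|f z - f x| / r) * (r / q) := by
    field_simp
  calc |f z - f x| / q = |f z - f x| / r * (r / q) := heq
    _ ≤ varBall f x r * (r / q) := mul_le_mul_of_nonneg_right h1 (by positivity)

/-- rational radii in `(0, 1/(n+1))` -/
def Qn (n : ℕ) : Set ℚ := {q : ℚ | 0 < (q:ℝ) ∧ (q:ℝ) < 1/(n+1)}

instance Qn_nonempty (n : ℕ) : Nonempty (Qn n) := by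
  obtain ⟨q, hq1, hq2⟩ := exists_rat_btwn (show (0:ℝ) < 1/(n+1) by positivity)
  exact ⟨⟨q, hq1, hq2⟩⟩

lemma lipLow_eq_iSup_iInf (hf : LipschitzWith K f) (x : X) :
    lipLow f x = ⨆ n : ℕ, ⨅ q : Qn n, varBall f x (q : ℝ) := by
  set l := nhdsWithin (0:ℝ) (Set.Ioi (0:ℝ))
  set h : ℝ → ℝ := fun r => varBall f x r with hh
  set I : ℕ → ℝ := fun n => sInf (h '' Ioo 0 (1/(n+1))) with hI
  set J : ℕ → ℝ := fun n => ⨅ q : Qn n, h (q:ℝ) with hJ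
  have heps : ∀ n : ℕ, (0:ℝ) < 1/(n+1) := fun n => by positivity
  have himg_ne : ∀ n : ℕ, (h '' Ioo 0 (1/(n+1))).Nonempty :=
    fun n => (Set.nonempty_Ioo.2 (heps n)).image h
  have hbdd_below : ∀ n : ℕ, BddBelow (h '' Ioo 0 (1/((n:ℝ)+1))) := by
    intro n
    refine ⟨0, ?_⟩
    rintro b ⟨r, hr, rfl⟩
    exact varBall_nonneg hf x r
  have hIK : ∀ n, I n ≤ K := by
    intro n
    have hmem : h (1/(n+1)/2) ∈ h '' Ioo 0 (1/(n+1)) :=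
      ⟨1/(n+1)/2, ⟨by positivity, by linarith [heps n]⟩, rfl⟩
    exact le_trans (csInf_le (hbdd_below n) hmem) (varBall_le hf x (by positivity))
  have hIbddAbove : BddAbove (Set.range I) := by
    refine ⟨K, ?_⟩; rintro b ⟨n, rfl⟩; exact hIK n
  have hstepA : lipLow f x = ⨆ n, I n := by
    rw [lipLow, Filter.liminf_eq]
    set S := {a : ℝ | ∀ᶠ r in l, a ≤ h r} with hS
    have hSne : (0:ℝ) ∈ S := by
      refine eventually_mem_nhdsWithin.mono ?_
      intro r hr; exact varBall_nonneg hf x r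
    have hSbdd : BddAbove S := by
      refine ⟨K, ?_⟩
      intro a ha
      have ha' : ∀ᶠ r in l, a ≤ h r := ha
      have : ∀ᶠ r in l, a ≤ h r ∧ r ∈ Ioi (0:ℝ) := ha'.and eventually_mem_nhdsWithin
      obtain ⟨r, har, hr⟩ := this.exists
      exact le_trans har (varBall_le hf x hr)
    apply le_antisymm
    · refine csSup_le ⟨0, hSne⟩ ?_
      intro a ha
      have ha2 : {r : ℝ | a ≤ h r} ∈ l := ha
      rw [mem_nhdsGT_iff_exists_Ioo_subset] at ha2
      obtain ⟨u, hu, hsub⟩ := ha2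
      obtain ⟨n, hn⟩ := exists_nat_one_div_lt (show (0:ℝ) < u from hu)
      have haI : a ≤ I n := by
        refine le_csInf (himg_ne n) ?_
        rintro b ⟨r, hr, rfl⟩
        exact hsub ⟨hr.1, lt_trans hr.2 hn⟩
      exact le_trans haI (le_ciSup hIbddAbove n)
    · refine ciSup_le ?_
      intro n
      refine le_csSup hSbdd ?_
      have : Ioo (0:ℝ) (1/(n+1)) ∈ l := Ioo_mem_nhdsGT_of_mem ⟨le_refl _, heps n⟩
      refine Filter.eventually_of_mem this ?_
      intro r hr
      exact csInf_le (hbdd_below n) ⟨r, hr, rfl⟩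
  have hstepB : ∀ n, I n = J n := by
    intro n
    have hJbdd : BddBelow (Set.range fun q : Qn n => h (q:ℝ)) := by
      refine ⟨0, ?_⟩; rintro b ⟨q, rfl⟩; exact varBall_nonneg hf x _
    apply le_antisymm
    · refine le_ciInf ?_
      intro q
      exact csInf_le (hbdd_below n) ⟨(q:ℝ), ⟨q.2.1, q.2.2⟩, rfl⟩
    · refine le_csInf (himg_ne n) ?_
      rintro b ⟨r, hr, rfl⟩
      refine le_of_forall_pos_le_add ?_
      intro ε hε
      have hK1 : (0:ℝ) < (K:ℝ) + 1 := by positivity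
      have hlow : ((K:ℝ)+1) * r / ((K:ℝ)+1+ε) < r := by
        rw [div_lt_iff₀ (by linarith)]
        have : ((K:ℝ)+1) < ((K:ℝ)+1+ε) := by linarith
        nlinarith [hr.1]
      obtain ⟨q, hq1, hq2⟩ := exists_rat_btwn hlow
      have hq0 : (0:ℝ) < (q:ℝ) := by
        refine lt_trans ?_ hq1
        apply div_pos ?_ (by linarith)
        nlinarith [hr.1]
      have hqQn : (q:ℚ) ∈ Qn n := ⟨hq0, lt_trans hq2 hr.2⟩
      have h1 : J n ≤ h (q:ℝ) := ciInf_le hJbdd ⟨q, hqQn⟩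
      have h2 : h (q:ℝ) ≤ h r * (r / (q:ℝ)) := varBall_small_le hf hq0 (le_of_lt hq2)
      have hrq : r / (q:ℝ) < ((K:ℝ)+1+ε)/((K:ℝ)+1) := by
        rw [div_lt_div_iff₀ hq0 hK1]
        rw [div_lt_iff₀ (show (0:ℝ) < (K:ℝ)+1+ε by linarith)] at hq1
        nlinarith
      have h3 : h r * (r / (q:ℝ)) ≤ h r + ε := by
        have hhr0 : 0 ≤ h r := varBall_nonneg hf x r
        have hhrK : h r ≤ K := varBall_le hf x hr.1
        have hge1 : (1:ℝ) ≤ r / (q:ℝ) := by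
          rw [le_div_iff₀ hq0]; linarith [hq2]
        have hb : h r * (r/(q:ℝ) - 1) ≤ (K:ℝ) * (ε/((K:ℝ)+1)) := by
          apply mul_le_mul hhrK _ (by linarith) (by positivity)
          have hlt : r/(q:ℝ) - 1 < ((K:ℝ)+1+ε)/((K:ℝ)+1) - 1 := by linarith
          calc r/(q:ℝ) - 1 ≤ ((K:ℝ)+1+ε)/((K:ℝ)+1) - 1 := le_of_lt hlt
            _ = ε/((K:ℝ)+1) := by field_simp; ring
        have hc : (K:ℝ) * (ε/((K:ℝ)+1)) ≤ ε := by
          rw [mul_div_assoc']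
          rw [div_le_iff₀ hK1]
          nlinarith [hε, NNReal.coe_nonneg K]
        nlinarith
      linarith
  rw [hstepA]
  congr 1
  ext n
  exact hstepB n

lemma varBall_lsc (hf : LipschitzWith K f) (hr : 0 < r) :
    LowerSemicontinuous (fun x : X => varBall f x r) := by
  intro x a ha
  obtain ⟨b, hb, hab⟩ := exists_lt_of_lt_csSup (varBall_img_nonempty x hr) ha
  obtain ⟨y, hy, rfl⟩ := hb
  set b := |f y - f x| / r with hbdef
  have hyr : dist y x < r := mem_ball.1 hy
  have hbpos : 0 < b - a := by linarith
  set θ : ℝ := min (r - dist y x) ((b - a) * r / ((K:ℝ)+1)) with hθ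
  have hθpos : 0 < θ := by
    apply lt_min (by linarith)
    apply div_pos (by positivity) (by positivity)
  rw [Metric.eventually_nhds_iff]
  refine ⟨θ, hθpos, ?_⟩
  intro x' hx'
  have hd : dist x x' < θ := by rwa [dist_comm]
  have hy' : y ∈ ball x' r := by
    rw [mem_ball]
    calc dist y x' ≤ dist y x + dist x x' := dist_triangle _ _ _
      _ < dist y x + (r - dist y x) := by
          have := lt_of_lt_of_le hd (min_le_left _ _); linarith
      _ = r := by ring
  have hval : |f y - f x'| / r ≤ varBall f x' r := le_varBall hf hr hy'
  have hfx : |f x - f x'| ≤ (K:ℝ) * dist x x' := by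
    simpa [Real.dist_eq] using hf.dist_le_mul x x'
  have h1 : |f y - f x| - |f y - f x'| ≤ (K:ℝ) * dist x x' := by
    have habs := abs_sub_abs_le_abs_sub (f y - f x) (f y - f x')
    have h2 : |f y - f x - (f y - f x')| = |f x' - f x| := by congr 1; ring
    rw [h2] at habs
    rw [abs_sub_comm] at hfx
    linarith
  have hd2 : dist x x' < (b - a) * r / ((K:ℝ)+1) := lt_of_lt_of_le hd (min_le_right _ _)
  have hlt : a < |f y - f x'| / r := by
    rw [lt_div_iff₀ hr]
    have hKd : (K:ℝ) * dist x x' ≤ ((K:ℝ)+1) * dist x x' :=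
      mul_le_mul_of_nonneg_right (by linarith) dist_nonneg
    have h4 : ((K:ℝ)+1) * dist x x' < (b-a) * r := by
      rw [lt_div_iff₀ (by positivity)] at hd2
      calc ((K:ℝ)+1) * dist x x' = dist x x' * ((K:ℝ)+1) := by ring
        _ < (b-a)*r := hd2
    have hb2 : b * r = |f y - f x| := by rw [hbdef]; field_simp
    nlinarith
  exact lt_of_lt_of_le hlt hval

lemma lipLow_measurable [MeasurableSpace X] [OpensMeasurableSpace X]
    (hf : LipschitzWith K f) : Measurable (lipLow f) := by
  have hrepr : lipLow f = fun x => ⨆ n : ℕ, ⨅ q : Qn n, varBall f x (q:ℝ) :=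
    funext fun x => lipLow_eq_iSup_iInf hf x
  rw [hrepr]
  exact Measurable.iSup fun n => Measurable.iInf fun q => (varBall_lsc hf q.2.1).measurable

lemma lipLow_nonneg (hf : LipschitzWith K f) (x : X) : 0 ≤ lipLow f x := by
  rw [lipLow_eq_iSup_iInf hf x]
  have h0 : (0:ℝ) ≤ ⨅ q : Qn 0, varBall f x (q:ℝ) :=
    le_ciInf fun q => varBall_nonneg hf x _
  have hbdd : BddAbove (Set.range fun n : ℕ => ⨅ q : Qn n, varBall f x (q:ℝ)) := by
    refine ⟨K, ?_⟩
    rintro b ⟨n, rfl⟩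
    obtain ⟨q⟩ := Qn_nonempty n
    refine le_trans (ciInf_le ⟨0, ?_⟩ q) (varBall_le hf x q.2.1)
    rintro b' ⟨q', rfl⟩
    exact varBall_nonneg hf x _
  exact le_trans h0 (le_ciSup hbdd 0)

lemma lipLow_le (hf : LipschitzWith K f) (x : X) : lipLow f x ≤ K := by
  rw [lipLow_eq_iSup_iInf hf x]
  refine ciSup_le fun n => ?_
  obtain ⟨q⟩ := Qn_nonempty n
  refine le_trans (ciInf_le ⟨0, ?_⟩ q) (varBall_le hf x q.2.1)
  rintro b' ⟨q', rfl⟩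
  exact varBall_nonneg hf x _

end VarAux

section ComplAux
open UniformSpace
variable {X : Type*} [MetricSpace X] {f : UniformSpace.Completion X → ℝ} {K : ℝ≥0} {r : ℝ}

lemma lipschitz_comp_coe (hf : LipschitzWith K f) :
    LipschitzWith K (fun y : X => f (y : Completion X)) := by
  have h := hf.comp Completion.coe_isometry.lipschitz
  rw [mul_one] at h
  exact h

lemma completion_preimage_ball (x : X) (s : ℝ) :
    ((↑) : X → Completion X) ⁻¹' (ball (x : Completion X) s) = ball x s := by
  ext y
  simp [mem_ball, Completion.dist_eq]

lemma completion_coe_mem_ball {x y : X} {s : ℝ} (h : y ∈ ball x s) :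
    (y : Completion X) ∈ ball (x : Completion X) s := by
  rwa [mem_ball, Completion.dist_eq]

lemma varBall_coe (hf : LipschitzWith K f) (z : X) (hr : 0 < r) :
    varBall f (z : Completion X) r = varBall (fun y : X => f (y : Completion X)) z r := by
  have hfι := lipschitz_comp_coe hf
  apply le_antisymm
  · refine csSup_le (varBall_img_nonempty _ hr) ?_
    rintro a ⟨w, hw, rfl⟩
    refine le_of_forall_pos_le_add ?_
    intro ε hε
    set δ : ℝ := min (ε*r/((K:ℝ)+1)) (r - dist w (z : Completion X)) with hδ
    have hδpos : 0 < δ := by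
      apply lt_min (by positivity)
      have := mem_ball.1 hw; linarith
    obtain ⟨y, hy⟩ := Metric.denseRange_iff.1 Completion.denseRange_coe w δ hδpos
    have hyz : y ∈ ball z r := by
      rw [mem_ball, ← Completion.dist_eq (α := X)]
      calc dist (y : Completion X) (z : Completion X)
          ≤ dist (y : Completion X) w + dist w (z : Completion X) := dist_triangle _ _ _
        _ < δ + dist w (z : Completion X) := by
            rw [dist_comm (y : Completion X) w]; linarith [hy]
        _ ≤ (r - dist w (z : Completion X)) + dist w (z : Completion X) :=
            add_le_add_left (min_le_right _ _) _
        _ = r := by ring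
    have hS : |f (y : Completion X) - f (z : Completion X)| / r
        ≤ varBall (fun y : X => f (y : Completion X)) z r :=
      le_varBall hfι hr hyz
    have hclose : |f w - f (y : Completion X)| ≤ (K:ℝ) * δ := by
      calc |f w - f (y : Completion X)| ≤ (K:ℝ) * dist w (y : Completion X) := by
            simpa [Real.dist_eq] using hf.dist_le_mul w (y : Completion X)
        _ ≤ (K:ℝ) * δ := mul_le_mul_of_nonneg_left (le_of_lt hy) (by positivity)
    have hKδ : (K:ℝ) * δ ≤ ε * r := by
      have h1 : δ ≤ ε*r/((K:ℝ)+1) := min_le_left _ _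
      have h2 : (K:ℝ) * δ ≤ (K:ℝ) * (ε*r/((K:ℝ)+1)) :=
        mul_le_mul_of_nonneg_left h1 (by positivity)
      calc (K:ℝ) * δ ≤ (K:ℝ) * (ε*r/((K:ℝ)+1)) := h2
        _ ≤ ε * r := by
            rw [mul_div_assoc']
            rw [div_le_iff₀ (by positivity)]
            nlinarith [NNReal.coe_nonneg K, hε, hr]
    have habs : |f w - f (z : Completion X)|
        ≤ |f (y : Completion X) - f (z : Completion X)| + ε * r := by
      have := abs_sub_le (f w) (f (y : Completion X)) (f (z : Completion X))
      linarith
    calc |f w - f (z : Completion X)| / r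
        ≤ (|f (y : Completion X) - f (z : Completion X)| + ε * r) / r := by
          gcongr
      _ = |f (y : Completion X) - f (z : Completion X)| / r + ε := by
          field_simp
      _ ≤ varBall (fun y : X => f (y : Completion X)) z r + ε := by linarith
  · refine csSup_le (varBall_img_nonempty _ hr) ?_
    rintro a ⟨y, hy, rfl⟩
    exact le_csSup (varBall_img_bddAbove hf _ hr)
      ⟨(y : Completion X), completion_coe_mem_ball hy, rfl⟩

lemma lipLow_coe (hf : LipschitzWith K f) (z : X) :
    lipLow (fun y : X => f (y : Completion X)) z = lipLow f (z : Completion X) := by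
  apply Filter.liminf_congr
  filter_upwards [eventually_mem_nhdsWithin] with r hr
  exact (varBall_coe hf z hr).symm

end ComplAux

section BallAux
variable {Y : Type*} [MetricSpace Y]

lemma ball_iUnion_radii (x : Y) {s δ : ℝ} (hδ : 0 < δ) :
    ⋃ n : ℕ, ball x (s - δ/(n+1)) = ball x s := by
  apply Set.Subset.antisymm
  · refine Set.iUnion_subset fun n => ball_subset_ball ?_
    have : (0:ℝ) < δ/(n+1) := by positivity
    linarith
  · intro y hy
    have hd : dist y x < s := mem_ball.1 hy
    obtain ⟨n, hn⟩ := exists_nat_one_div_lt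
      (show (0:ℝ) < (s - dist y x)/δ from div_pos (by linarith) hδ)
    refine Set.mem_iUnion.2 ⟨n, mem_ball.2 ?_⟩
    rw [div_lt_div_iff₀ (by positivity) hδ] at hn
    have hδn : δ/((n:ℝ)+1) < s - dist y x := by
      rw [div_lt_iff₀ (by positivity)]
      nlinarith
    linarith

lemma radii_monotone (x : Y) {s δ : ℝ} (hδ : 0 < δ) :
    Monotone (fun n : ℕ => ball x (s - δ/(n+1))) := by
  intro n m hnm
  apply ball_subset_ball
  have h1 : (0:ℝ) < n+1 := by positivity
  have h2 : (n:ℝ)+1 ≤ (m:ℝ)+1 := by exact_mod_cast by omega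
  have h3 : δ/((m:ℝ)+1) ≤ δ/((n:ℝ)+1) := by
    apply div_le_div_of_nonneg_left (le_of_lt hδ) h1 h2
  linarith

lemma measure_ball_eq_iSup [MeasurableSpace Y] (ν : Measure Y)
    (x : Y) {s δ : ℝ} (hδ : 0 < δ) :
    ν (ball x s) = ⨆ n : ℕ, ν (ball x (s - δ/(n+1))) := by
  rw [← ball_iUnion_radii x hδ]
  exact Directed.measure_iUnion ((radii_monotone x hδ).directed_le)

lemma tendsto_measure_ball_radii [MeasurableSpace Y] (ν : Measure Y)
    (x : Y) {s δ : ℝ} (hδ : 0 < δ) (hfin : ν (ball x s) ≠ ⊤) :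
    Filter.Tendsto (fun n : ℕ => (ν (ball x (s - δ/(n+1)))).toReal) Filter.atTop
      (nhds ((ν (ball x s)).toReal)) := by
  have h1 : Filter.Tendsto (fun n : ℕ => ν (ball x (s - δ/(n+1)))) Filter.atTop
      (nhds (ν (ball x s))) := by
    rw [measure_ball_eq_iSup ν x hδ]
    exact tendsto_atTop_iSup (fun n m hnm => measure_mono (radii_monotone x hδ hnm))
  exact (ENNReal.tendsto_toReal hfin).comp h1

end BallAux

set_option maxHeartbeats 1000000 in
/-- the completion `X̄` of a doubling `p`-Poincaré space `X`, equipped with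
the measure `μ̄(Y) = μ(Y ∩ X)`, is doubling and satisfies a `p`-Poincaré inequality, with
constants depending only on the original constants. -/
theorem completion_doubling_and_poincare
    (Cμ : ℝ≥0) (L p : ℝ) (hL : 1 ≤ L) (hp : 1 ≤ p) :
    ∃ (C' : ℝ≥0) (L' : ℝ), 1 ≤ L' ∧
      ∀ (X : Type) [MetricSpace X] [MeasurableSpace X] [BorelSpace X] (μ : Measure X),
        DoublingWith μ Cμ → PoincareIneq μ p L →
        letI : MeasurableSpace (UniformSpace.Completion X) :=
          borel (UniformSpace.Completion X)
        letI : BorelSpace (UniformSpace.Completion X) := ⟨rfl⟩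
        ∀ ν : Measure (UniformSpace.Completion X),
          (∀ Y : Set (UniformSpace.Completion X), MeasurableSet Y →
            ν Y = μ ((fun x : X => (x : UniformSpace.Completion X)) ⁻¹' Y)) →
          DoublingWith ν C' ∧ PoincareIneq ν p L' := by
  classical
  refine ⟨Cμ, L, hL, ?_⟩
  intro X _ _ _ μ hD hP
  letI : MeasurableSpace (UniformSpace.Completion X) := borel (UniformSpace.Completion X)
  letI : BorelSpace (UniformSpace.Completion X) := ⟨rfl⟩
  intro ν hν
  have hιm : Measurable (fun x : X => (x : UniformSpace.Completion X)) :=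
    (UniformSpace.Completion.continuous_coe X).measurable
  have hν_eq : ν = μ.map (fun x : X => (x : UniformSpace.Completion X)) := by
    refine MeasureTheory.Measure.ext fun s hs => ?_
    rw [MeasureTheory.Measure.map_apply hιm hs, hν s hs]
  have hball_coe : ∀ (x : X) (s : ℝ), ν (ball ((x : UniformSpace.Completion X)) s) = μ (ball x s) := by
    intro x s
    rw [hν _ measurableSet_ball, completion_preimage_ball]
  -- positivity and finiteness of balls for ν
  have hνball : ∀ (xb : UniformSpace.Completion X) (s : ℝ), 0 < s → 0 < ν (ball xb s) ∧ ν (ball xb s) < ⊤ := by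
    intro xb s hs
    obtain ⟨x, hx⟩ := Metric.denseRange_iff.1 UniformSpace.Completion.denseRange_coe xb (s/2)
      (by positivity)
    constructor
    · refine lt_of_lt_of_le (hP.1 x (s/2) (by positivity)).1 ?_
      rw [← hball_coe]
      refine measure_mono (ball_subset_ball' ?_)
      rw [dist_comm]
      linarith [hx]
    · refine lt_of_le_of_lt (le_trans (measure_mono (ball_subset_ball' (y := (x : UniformSpace.Completion X))
        (ε₂ := 2*s) (by linarith [hx]))) (le_of_eq (hball_coe x (2*s)))) ?_
      exact (hP.1 x (2*s) (by linarith)).2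
  -- transfer of set integrals over balls centered in X
  have htransfer : ∀ (g : UniformSpace.Completion X → ℝ), Measurable g → ∀ (x0 : X) (t : ℝ),
      ∫ y in ball ((x0 : UniformSpace.Completion X)) t, g y ∂ν = ∫ y in ball x0 t, g ((y : UniformSpace.Completion X)) ∂μ := by
    intro g hg x0 t
    rw [hν_eq, MeasureTheory.Measure.restrict_map hιm measurableSet_ball,
      MeasureTheory.integral_map hιm.aemeasurable
        (hg.aestronglyMeasurable), completion_preimage_ball]
  -- bounded measurable functions are integrable on finite-measure sets
  have hIntBdd : ∀ (g : UniformSpace.Completion X → ℝ) (M : ℝ), Measurable g → ∀ (s : Set (UniformSpace.Completion X)), MeasurableSet s →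
      ν s < ⊤ → (∀ y ∈ s, |g y| ≤ M) → IntegrableOn g s ν := by
    intro g M hg s hms hfin hbd
    haveI : IsFiniteMeasure (ν.restrict s) :=
      ⟨by rwa [MeasureTheory.Measure.restrict_apply_univ]⟩
    refine ⟨hg.aestronglyMeasurable, MeasureTheory.HasFiniteIntegral.of_bounded (C := M) ?_⟩
    filter_upwards [MeasureTheory.ae_restrict_mem hms] with y hy
    simpa [Real.norm_eq_abs] using hbd y hy
  constructor
  -- ===================== Doubling =====================
  · intro xb r hr
    rw [measure_ball_eq_iSup ν xb (show (0:ℝ) < r from hr) (s := 2*r)]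
    refine iSup_le fun n => ?_
    set e : ℝ := r/(8*((n:ℝ)+1)) with he_def
    have hn1 : (0:ℝ) < (n:ℝ)+1 := by positivity
    have he : 0 < e := by positivity
    have he8 : e ≤ r/8 := by
      rw [he_def]
      rw [div_le_div_iff₀ (by positivity) (by norm_num)]
      nlinarith
    have he3 : 3*e ≤ r/((n:ℝ)+1) := by
      have h0 : 0 ≤ r/((n:ℝ)+1) := by positivity
      have halt : e = r/((n:ℝ)+1)/8 := by rw [he_def]; rw [div_div]; ring_nf
      rw [halt]; linarith
    obtain ⟨x, hx⟩ := Metric.denseRange_iff.1 UniformSpace.Completion.denseRange_coe xb e he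
    have ht : 0 < r - e := by linarith
    calc ν (ball xb (2*r - r/((n:ℝ)+1)))
        ≤ ν (ball ((x : UniformSpace.Completion X)) (2*(r-e))) := by
          refine measure_mono (ball_subset_ball' ?_)
          have := hx
          rw [dist_comm] at this
          rw [dist_comm]
          linarith
      _ = μ (ball x (2*(r-e))) := hball_coe x _
      _ ≤ (Cμ : ℝ≥0∞) * μ (ball x (r-e)) := hD x (r-e) ht
      _ = (Cμ : ℝ≥0∞) * ν (ball ((x : UniformSpace.Completion X)) (r-e)) := by rw [hball_coe]
      _ ≤ (Cμ : ℝ≥0∞) * ν (ball xb r) := by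
          refine mul_le_mul_right (measure_mono (ball_subset_ball' ?_)) _
          rw [dist_comm] at hx
          linarith [hx]
  -- ===================== Poincaré =====================
  refine ⟨hνball, ?_⟩
  intro f hf xb r hr
  obtain ⟨K, hK⟩ := hf
  have hLpos : (0:ℝ) < L := lt_of_lt_of_le one_pos hL
  have hppos : (0:ℝ) < p := lt_of_lt_of_le one_pos hp
  have hfι : LipschitzWith K (fun y : X => f ((y : UniformSpace.Completion X))) := lipschitz_comp_coe hK
  have hmf : Measurable f := hK.continuous.measurable
  have hmlip : Measurable (lipLow f) := lipLow_measurable hK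
  have hGm : Measurable (fun z : UniformSpace.Completion X => lipLow f z ^ p) := by fun_prop
  have hG0 : ∀ z, 0 ≤ lipLow f z ^ p := fun z => Real.rpow_nonneg (lipLow_nonneg hK z) p
  have hGK : ∀ z, |lipLow f z ^ p| ≤ ((K:ℝ)+1) ^ p := by
    intro z
    rw [abs_of_nonneg (hG0 z)]
    exact Real.rpow_le_rpow (lipLow_nonneg hK z)
      (le_trans (lipLow_le hK z) (by linarith)) (by linarith)
  have hBfin : ν (ball xb r) < ⊤ := (hνball xb r hr).2
  have hBpos : 0 < ν (ball xb r) := (hνball xb r hr).1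
  set b : ℝ := (ν (ball xb r)).toReal with hb_def
  have hbpos : 0 < b := ENNReal.toReal_pos hBpos.ne' hBfin.ne
  set c : ℝ := ⨍ z in ball xb r, f z ∂ν with hc_def
  have hLr : 0 < L * r := by positivity
  have hBLfin : ν (ball xb (L*r)) < ⊤ := (hνball xb (L*r) hLr).2
  have hBLpos : 0 < ν (ball xb (L*r)) := (hνball xb (L*r) hLr).1
  set T : ℝ := ∫ z in ball xb (L*r), lipLow f z ^ p ∂ν with hT_def
  have hT0 : 0 ≤ T := setIntegral_nonneg measurableSet_ball (fun z _ => hG0 z)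
  set DL : ℝ := (ν (ball xb (L*r))).toReal with hDL_def
  have hDLpos : 0 < DL := ENNReal.toReal_pos hBLpos.ne' hBLfin.ne
  have hIntG : IntegrableOn (fun z : UniformSpace.Completion X => lipLow f z ^ p) (ball xb (L*r)) ν :=
    hIntBdd _ (((K:ℝ)+1)^p) hGm _ measurableSet_ball hBLfin (fun y _ => hGK y)
  -- bound for f on the ball B
  have hfB : ∀ y ∈ ball xb r, |f y - f xb| ≤ (K:ℝ)*r := by
    intro y hy
    calc |f y - f xb| ≤ (K:ℝ) * dist y xb := by
          simpa [Real.dist_eq] using hK.dist_le_mul y xb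
      _ ≤ (K:ℝ)*r := mul_le_mul_of_nonneg_left (le_of_lt (mem_ball.1 hy)) (by positivity)
  -- average of f over a subset of B is within K*r of f xb
  have havg_close : ∀ (s : Set (UniformSpace.Completion X)), MeasurableSet s → 0 < ν s →
      ν s < ⊤ → s ⊆ ball xb r → |(⨍ y in s, f y ∂ν) - f xb| ≤ (K:ℝ)*r := by
    intro s hms hpos hfin hsub
    have hsr : 0 < (ν s).toReal := ENNReal.toReal_pos hpos.ne' hfin.ne
    have hintf : IntegrableOn f s ν := by
      refine hIntBdd f (|f xb| + (K:ℝ)*r) hmf s hms hfin (fun y hy => ?_)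
      have := hfB y (hsub hy)
      have habs := abs_sub_abs_le_abs_sub (f y) (f xb)
      linarith [abs_nonneg (f y - f xb)]
    have hint : IntegrableOn (fun y => f y - f xb) s ν :=
      hintf.sub (MeasureTheory.integrableOn_const hfin.ne)
    have h1 : ∫ y in s, (f y - f xb) ∂ν = (∫ y in s, f y ∂ν) - (ν s).toReal * f xb := by
      rw [MeasureTheory.integral_sub hintf (MeasureTheory.integrableOn_const hfin.ne),
        MeasureTheory.setIntegral_const, smul_eq_mul, measureReal_def]
    have h2 : (⨍ y in s, f y ∂ν) - f xb = (ν s).toReal⁻¹ * ∫ y in s, (f y - f xb) ∂ν := by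
      rw [h1, MeasureTheory.setAverage_eq, smul_eq_mul, measureReal_def]
      field_simp
    have h3 : |∫ y in s, (f y - f xb) ∂ν| ≤ (K:ℝ)*r * (ν s).toReal := by
      have := MeasureTheory.norm_setIntegral_le_of_norm_le_const (μ := ν) (s := s)
        (f := fun y => f y - f xb)
        (C := (K:ℝ)*r) hfin (fun y hy => by
          simpa [Real.norm_eq_abs] using hfB y (hsub hy))
      simpa [Real.norm_eq_abs, measureReal_def] using this
    rw [h2, abs_mul, abs_of_nonneg (inv_nonneg.2 (le_of_lt hsr))]
    calc (ν s).toReal⁻¹ * |∫ y in s, (f y - f xb) ∂ν|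
        ≤ (ν s).toReal⁻¹ * ((K:ℝ)*r * (ν s).toReal) := by
          exact mul_le_mul_of_nonneg_left h3 (inv_nonneg.2 (le_of_lt hsr))
      _ = (K:ℝ)*r := by field_simp
  have hcB : |c - f xb| ≤ (K:ℝ)*r :=
    havg_close (ball xb r) measurableSet_ball hBpos hBfin subset_rfl
  -- the key estimate, for each n
  have key : ∀ n : ℕ, (⨍ y in ball xb r, |f y - c| ∂ν) ≤
      L*r*(T / (ν (ball xb (L*r - ((2*L+1)*r/8)/((n:ℝ)+1)))).toReal)^(1/p)
        + (4*(K:ℝ)*r/b) * (b - (ν (ball xb (r - (3*r/8)/((n:ℝ)+1)))).toReal) := by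
    intro n
    have hn1 : (0:ℝ) < (n:ℝ)+1 := by positivity
    set δ : ℝ := r/(8*((n:ℝ)+1)) with hδ_def
    have hδpos : 0 < δ := by positivity
    have hδ8 : δ ≤ r/8 := by
      rw [hδ_def, div_le_div_iff₀ (by positivity) (by norm_num)]
      nlinarith
    obtain ⟨x, hx⟩ := Metric.denseRange_iff.1 UniformSpace.Completion.denseRange_coe xb δ hδpos
    set s : ℝ := r - 2*δ with hs_def
    have hs : 0 < s := by rw [hs_def]; linarith
    have hsr : s < r := by rw [hs_def]; linarith
    -- inclusions
    have hBn_sub : ball ((x : UniformSpace.Completion X)) s ⊆ ball xb r := by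
      refine ball_subset_ball' ?_
      rw [dist_comm] at hx
      rw [hs_def]; linarith [hx]
    have hBn_sup : ball xb (r - 3*δ) ⊆ ball ((x : UniformSpace.Completion X)) s := by
      refine ball_subset_ball' ?_
      rw [hs_def]; linarith [hx]
    -- measures
    have hBnμ : ν (ball ((x : UniformSpace.Completion X)) s) = μ (ball x s) := hball_coe x s
    have hBnpos : 0 < ν (ball ((x : UniformSpace.Completion X)) s) := by
      rw [hBnμ]; exact (hP.1 x s hs).1
    have hBnfin : ν (ball ((x : UniformSpace.Completion X)) s) < ⊤ := by
      rw [hBnμ]; exact (hP.1 x s hs).2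
    set bn : ℝ := (ν (ball ((x : UniformSpace.Completion X)) s)).toReal with hbn_def
    have hbnpos : 0 < bn := ENNReal.toReal_pos hBnpos.ne' hBnfin.ne
    have hbnb : bn ≤ b := ENNReal.toReal_mono hBfin.ne (measure_mono hBn_sub)
    set cn : ℝ := ⨍ z in ball ((x : UniformSpace.Completion X)) s, f z ∂ν with hcn_def
    have hcn_close : |cn - f xb| ≤ (K:ℝ)*r :=
      havg_close _ measurableSet_ball hBnpos hBnfin hBn_sub
    -- pointwise bounds on B
    have hfc : ∀ y ∈ ball xb r, |f y - c| ≤ 2*(K:ℝ)*r := by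
      intro y hy
      have h1 := hfB y hy
      have := abs_sub_le (f y) (f xb) c
      rw [abs_sub_comm (f xb) c] at this
      linarith
    have hfcn : ∀ y ∈ ball xb r, |f y - cn| ≤ 2*(K:ℝ)*r := by
      intro y hy
      have h1 := hfB y hy
      have := abs_sub_le (f y) (f xb) cn
      rw [abs_sub_comm (f xb) cn] at this
      linarith
    -- integrability
    have hIfc : IntegrableOn (fun y => |f y - c|) (ball xb r) ν :=
      hIntBdd _ (2*(K:ℝ)*r) ((hmf.sub measurable_const).abs) _ measurableSet_ball hBfin
        (fun y hy => by rw [abs_abs]; exact hfc y hy)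
    have hIfcn : IntegrableOn (fun y => |f y - cn|) (ball xb r) ν :=
      hIntBdd _ (2*(K:ℝ)*r) ((hmf.sub measurable_const).abs) _ measurableSet_ball hBfin
        (fun y hy => by rw [abs_abs]; exact hfcn y hy)
    have hIf : IntegrableOn f (ball xb r) ν := by
      refine hIntBdd f (|f xb| + (K:ℝ)*r) hmf _ measurableSet_ball hBfin (fun y hy => ?_)
      have := hfB y hy
      have habs := abs_sub_abs_le_abs_sub (f y) (f xb)
      linarith [abs_nonneg (f y - f xb)]
    have hIfsubcn : IntegrableOn (fun y => f y - cn) (ball xb r) ν :=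
      hIf.sub (MeasureTheory.integrableOn_const hBfin.ne)
    -- η : the measure of the annulus
    set η : ℝ := (ν (ball xb r \ ball ((x : UniformSpace.Completion X)) s)).toReal with hη_def
    have hηfin : ν (ball xb r \ ball ((x : UniformSpace.Completion X)) s) < ⊤ :=
      lt_of_le_of_lt (measure_mono Set.diff_subset) hBfin
    have hη_eq : η = b - bn := by
      rw [hη_def, measure_diff hBn_sub measurableSet_ball.nullMeasurableSet hBnfin.ne,
        ENNReal.toReal_sub_of_le (measure_mono hBn_sub) hBfin.ne]
    have hη_le : η ≤ b - (ν (ball xb (r - (3*r/8)/((n:ℝ)+1)))).toReal := by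
      have hrad : r - (3*r/8)/((n:ℝ)+1) = r - 3*δ := by
        rw [hδ_def]; field_simp; try ring
      rw [hη_eq, hrad]
      have : (ν (ball xb (r - 3*δ))).toReal ≤ bn :=
        ENNReal.toReal_mono hBnfin.ne (measure_mono hBn_sup)
      linarith
    have hη0 : 0 ≤ η := ENNReal.toReal_nonneg
    -- |c - cn| ≤ 2 K r η / b
    have hccn : |c - cn| ≤ 2*(K:ℝ)*r*η/b := by
      have hsplit : ∫ y in ball xb r, (f y - cn) ∂ν =
          (∫ y in ball ((x : UniformSpace.Completion X)) s, (f y - cn) ∂ν) +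
          ∫ y in ball xb r \ ball ((x : UniformSpace.Completion X)) s, (f y - cn) ∂ν := by
        rw [← MeasureTheory.setIntegral_union (Set.disjoint_sdiff_right)
          (measurableSet_ball.diff measurableSet_ball)
          (hIfsubcn.mono_set hBn_sub) (hIfsubcn.mono_set Set.diff_subset),
          Set.union_diff_cancel hBn_sub]
      have hBn0 : ∫ y in ball ((x : UniformSpace.Completion X)) s, (f y - cn) ∂ν = 0 := by
        rw [MeasureTheory.integral_sub (hIf.mono_set hBn_sub)
          (MeasureTheory.integrableOn_const hBnfin.ne),
          MeasureTheory.setIntegral_const, smul_eq_mul, measureReal_def]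
        have : cn * bn = ∫ y in ball ((x : UniformSpace.Completion X)) s, f y ∂ν := by
          rw [hcn_def, MeasureTheory.setAverage_eq, smul_eq_mul, measureReal_def, ← hbn_def]
          field_simp
        rw [← hbn_def]
        linarith [this]
      have hdiffb : |∫ y in ball xb r \ ball ((x : UniformSpace.Completion X)) s,
          (f y - cn) ∂ν| ≤ 2*(K:ℝ)*r*η := by
        have := MeasureTheory.norm_setIntegral_le_of_norm_le_const (μ := ν)
          (s := ball xb r \ ball ((x : UniformSpace.Completion X)) s)
          (f := fun y => f y - cn)
          (C := 2*(K:ℝ)*r) hηfin (fun y hy => by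
            simpa [Real.norm_eq_abs] using hfcn y hy.1)
        rw [hη_def]
        simpa [Real.norm_eq_abs, measureReal_def] using this
      have hcsub : c - cn = b⁻¹ * ∫ y in ball xb r, (f y - cn) ∂ν := by
        have h1 : ∫ y in ball xb r, (f y - cn) ∂ν = (∫ y in ball xb r, f y ∂ν) - b * cn := by
          rw [MeasureTheory.integral_sub hIf
            (MeasureTheory.integrableOn_const hBfin.ne),
            MeasureTheory.setIntegral_const, smul_eq_mul, measureReal_def, ← hb_def]
        rw [h1, hc_def, MeasureTheory.setAverage_eq, smul_eq_mul, measureReal_def, ← hb_def]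
        field_simp
      rw [hcsub, hsplit, hBn0, zero_add, abs_mul, abs_of_nonneg (inv_nonneg.2 (le_of_lt hbpos))]
      rw [div_eq_inv_mul]
      calc b⁻¹ * |∫ y in ball xb r \ ball ((x : UniformSpace.Completion X)) s, (f y - cn) ∂ν|
          ≤ b⁻¹ * (2*(K:ℝ)*r*η) := mul_le_mul_of_nonneg_left hdiffb (inv_nonneg.2 (le_of_lt hbpos))
        _ = b⁻¹ * (2*(K:ℝ)*r*η) := rfl
    -- main splitting
    have hstep1 : ∫ y in ball xb r, |f y - c| ∂ν ≤
        (∫ y in ball xb r, |f y - cn| ∂ν) + b * |c - cn| := by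
      have hmono : ∫ y in ball xb r, |f y - c| ∂ν ≤
          ∫ y in ball xb r, (|f y - cn| + |c - cn|) ∂ν := by
        refine MeasureTheory.setIntegral_mono_on hIfc
          (hIfcn.add (MeasureTheory.integrableOn_const hBfin.ne))
          measurableSet_ball (fun y hy => ?_)
        have := abs_sub_le (f y) cn c
        rw [abs_sub_comm cn c] at this
        linarith
      have hadd : ∫ y in ball xb r, (|f y - cn| + |c - cn|) ∂ν =
          (∫ y in ball xb r, |f y - cn| ∂ν) + b * |c - cn| := by
        rw [MeasureTheory.integral_add hIfcn
          (MeasureTheory.integrableOn_const hBfin.ne),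
          MeasureTheory.setIntegral_const, smul_eq_mul, measureReal_def, ← hb_def]
      linarith
    have hstep2 : ∫ y in ball xb r, |f y - cn| ∂ν ≤
        (∫ y in ball ((x : UniformSpace.Completion X)) s, |f y - cn| ∂ν) + 2*(K:ℝ)*r*η := by
      have hsplit : ∫ y in ball xb r, |f y - cn| ∂ν =
          (∫ y in ball ((x : UniformSpace.Completion X)) s, |f y - cn| ∂ν) +
          ∫ y in ball xb r \ ball ((x : UniformSpace.Completion X)) s, |f y - cn| ∂ν := by
        rw [← MeasureTheory.setIntegral_union (Set.disjoint_sdiff_right)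
          (measurableSet_ball.diff measurableSet_ball)
          (hIfcn.mono_set hBn_sub) (hIfcn.mono_set Set.diff_subset),
          Set.union_diff_cancel hBn_sub]
      have hdiffb : ∫ y in ball xb r \ ball ((x : UniformSpace.Completion X)) s,
          |f y - cn| ∂ν ≤ 2*(K:ℝ)*r*η := by
        have hnorm := MeasureTheory.norm_setIntegral_le_of_norm_le_const (μ := ν)
          (s := ball xb r \ ball ((x : UniformSpace.Completion X)) s)
          (f := fun y => |f y - cn|)
          (C := 2*(K:ℝ)*r) hηfin (fun y hy => by
            simpa [Real.norm_eq_abs, abs_abs] using hfcn y hy.1)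
        rw [Real.norm_eq_abs, measureReal_def] at hnorm
        rw [hη_def]
        exact le_trans (le_abs_self _) hnorm
      linarith
    -- the μ-side Poincaré inequality
    have hmid : (⨍ y in ball ((x : UniformSpace.Completion X)) s, |f y - cn| ∂ν) ≤
        L*s*(T / (ν (ball xb (L*r - ((2*L+1)*r/8)/((n:ℝ)+1)))).toReal)^(1/p) := by
      have hcne : cn = ⨍ z in ball x s, f ((z : UniformSpace.Completion X)) ∂μ := by
        rw [hcn_def, MeasureTheory.setAverage_eq, MeasureTheory.setAverage_eq,
          htransfer f hmf x s, measureReal_def, measureReal_def, hball_coe]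
      have hmid_eq : (⨍ y in ball ((x : UniformSpace.Completion X)) s, |f y - cn| ∂ν) =
          ⨍ y in ball x s, |f ((y : UniformSpace.Completion X)) - cn| ∂μ := by
        rw [MeasureTheory.setAverage_eq, MeasureTheory.setAverage_eq,
          htransfer (fun y => |f y - cn|) ((hmf.sub measurable_const).abs) x s, measureReal_def,
            measureReal_def, hball_coe]
      have hpoin := hP.2 (fun y : X => f ((y : UniformSpace.Completion X))) ⟨K, hfι⟩ x s hs
      rw [← hcne] at hpoin
      rw [hmid_eq]
      refine le_trans hpoin ?_
      -- now bound the μ-side right hand side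
      have hLs : 0 < L*s := by positivity
      have hRμ : ∫ z in ball x (L*s), lipLow (fun y : X => f ((y : UniformSpace.Completion X))) z ^ p ∂μ
          = ∫ y in ball ((x : UniformSpace.Completion X)) (L*s), lipLow f y ^ p ∂ν := by
        rw [htransfer (fun z => lipLow f z ^ p) hGm x (L*s)]
        refine MeasureTheory.integral_congr_ae (Filter.Eventually.of_forall (fun z => ?_))
        show lipLow (fun y : X => f ((y : UniformSpace.Completion X))) z ^ p = lipLow f ((z : UniformSpace.Completion X)) ^ p
        rw [lipLow_coe hK z]
      -- inclusion of the ν-side ball into BL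
      have hsubL : ball ((x : UniformSpace.Completion X)) (L*s) ⊆ ball xb (L*r) := by
        refine ball_subset_ball' ?_
        rw [dist_comm] at hx
        have : L*s + δ ≤ L*r := by
          rw [hs_def]
          nlinarith [hδpos, hL]
        linarith [hx]
      have hsupL : ball xb (L*r - (2*L+1)*δ) ⊆ ball ((x : UniformSpace.Completion X)) (L*s) := by
        refine ball_subset_ball' ?_
        have : (L*r - (2*L+1)*δ) + δ ≤ L*s := by
          rw [hs_def]; ring_nf; nlinarith [hδpos]
        linarith [hx]
      have hrad2 : L*r - ((2*L+1)*r/8)/((n:ℝ)+1) = L*r - (2*L+1)*δ := by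
        rw [hδ_def]; field_simp; try ring
      have hDn_fin : ν (ball xb (L*r - (2*L+1)*δ)) < ⊤ := by
        refine lt_of_le_of_lt (measure_mono (ball_subset_ball ?_)) hBLfin
        nlinarith [hδpos]
      have hDn_pos : 0 < ν (ball xb (L*r - (2*L+1)*δ)) := by
        refine (hνball xb _ ?_).1
        have h1 : (2*L+1)*δ ≤ 3*L*(r/8) := by nlinarith [hδ8, hδpos, hLpos]
        nlinarith [hLpos, hr]
      have hdnpos : 0 < (ν (ball xb (L*r - (2*L+1)*δ))).toReal :=
        ENNReal.toReal_pos hDn_pos.ne' hDn_fin.ne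
      have hνLs_fin : ν (ball ((x : UniformSpace.Completion X)) (L*s)) < ⊤ := by
        rw [hball_coe]; exact (hP.1 x (L*s) hLs).2
      have hνLs_pos : 0 < ν (ball ((x : UniformSpace.Completion X)) (L*s)) := by
        rw [hball_coe]; exact (hP.1 x (L*s) hLs).1
      have hden : (ν (ball xb (L*r - (2*L+1)*δ))).toReal
          ≤ (ν (ball ((x : UniformSpace.Completion X)) (L*s))).toReal :=
        ENNReal.toReal_mono hνLs_fin.ne (measure_mono hsupL)
      have hnum : ∫ y in ball ((x : UniformSpace.Completion X)) (L*s), lipLow f y ^ p ∂ν ≤ T := by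
        rw [hT_def]
        refine MeasureTheory.setIntegral_mono_set hIntG
          (Filter.Eventually.of_forall (fun z => hG0 z)) ?_
        exact Filter.Eventually.of_forall hsubL
      have hnum0 : 0 ≤ ∫ y in ball ((x : UniformSpace.Completion X)) (L*s), lipLow f y ^ p ∂ν :=
        setIntegral_nonneg measurableSet_ball (fun z _ => hG0 z)
      have hQ : (⨍ z in ball x (L*s),
            lipLow (fun y : X => f ((y : UniformSpace.Completion X))) z ^ p ∂μ)
          ≤ T / (ν (ball xb (L*r - (2*L+1)*δ))).toReal := by
        rw [MeasureTheory.setAverage_eq, smul_eq_mul, hRμ, measureReal_def, ← hball_coe x (L*s), div_eq_inv_mul]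
        refine mul_le_mul (inv_anti₀ hdnpos hden) hnum hnum0 (inv_nonneg.2 (le_of_lt hdnpos))
      have hQ0 : 0 ≤ ⨍ z in ball x (L*s),
          lipLow (fun y : X => f ((y : UniformSpace.Completion X))) z ^ p ∂μ := by
        rw [MeasureTheory.setAverage_eq, smul_eq_mul]
        exact mul_nonneg (inv_nonneg.2 ENNReal.toReal_nonneg)
          (setIntegral_nonneg measurableSet_ball
            (fun z _ => Real.rpow_nonneg (lipLow_nonneg hfι z) p))
      rw [hrad2]
      refine mul_le_mul (by rfl) ?_ (Real.rpow_nonneg hQ0 _) (by positivity)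
      exact Real.rpow_le_rpow hQ0 hQ (by positivity)
    -- combine
    have hcomb : (⨍ y in ball xb r, |f y - c| ∂ν) ≤
        (⨍ y in ball ((x : UniformSpace.Completion X)) s, |f y - cn| ∂ν) + (4*(K:ℝ)*r/b)*η := by
      have hAvg : (⨍ y in ball xb r, |f y - c| ∂ν) = b⁻¹ * ∫ y in ball xb r, |f y - c| ∂ν := by
        rw [MeasureTheory.setAverage_eq, smul_eq_mul, measureReal_def, ← hb_def]
      have hAvgn : (⨍ y in ball ((x : UniformSpace.Completion X)) s, |f y - cn| ∂ν) =
          bn⁻¹ * ∫ y in ball ((x : UniformSpace.Completion X)) s, |f y - cn| ∂ν := by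
        rw [MeasureTheory.setAverage_eq, smul_eq_mul, measureReal_def, ← hbn_def]
      have hIn0 : 0 ≤ ∫ y in ball ((x : UniformSpace.Completion X)) s, |f y - cn| ∂ν :=
        setIntegral_nonneg measurableSet_ball (fun z _ => abs_nonneg _)
      have hinv : b⁻¹ ≤ bn⁻¹ := inv_anti₀ hbnpos hbnb
      rw [hAvg, hAvgn]
      have hchain : ∫ y in ball xb r, |f y - c| ∂ν ≤
          (∫ y in ball ((x : UniformSpace.Completion X)) s, |f y - cn| ∂ν) + 4*(K:ℝ)*r*η := by
        have hb_ccn : b * |c - cn| ≤ 2*(K:ℝ)*r*η := by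
          have := mul_le_mul_of_nonneg_left hccn (le_of_lt hbpos)
          calc b * |c - cn| ≤ b * (2*(K:ℝ)*r*η/b) := this
            _ = 2*(K:ℝ)*r*η := by field_simp
        linarith [hstep1, hstep2]
      calc b⁻¹ * ∫ y in ball xb r, |f y - c| ∂ν
          ≤ b⁻¹ * ((∫ y in ball ((x : UniformSpace.Completion X)) s, |f y - cn| ∂ν)
              + 4*(K:ℝ)*r*η) := mul_le_mul_of_nonneg_left hchain (inv_nonneg.2 (le_of_lt hbpos))
        _ = b⁻¹ * (∫ y in ball ((x : UniformSpace.Completion X)) s, |f y - cn| ∂ν)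
              + (4*(K:ℝ)*r/b)*η := by field_simp; try ring
        _ ≤ bn⁻¹ * (∫ y in ball ((x : UniformSpace.Completion X)) s, |f y - cn| ∂ν)
              + (4*(K:ℝ)*r/b)*η := by
            have := mul_le_mul_of_nonneg_right hinv hIn0
            linarith
    have hLsLr : L*s*(T / (ν (ball xb (L*r - ((2*L+1)*r/8)/((n:ℝ)+1)))).toReal)^(1/p) ≤
        L*r*(T / (ν (ball xb (L*r - ((2*L+1)*r/8)/((n:ℝ)+1)))).toReal)^(1/p) := by
      refine mul_le_mul_of_nonneg_right ?_ ?_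
      · nlinarith [hLpos]
      · refine Real.rpow_nonneg ?_ _
        positivity
    have hηterm : (4*(K:ℝ)*r/b)*η ≤
        (4*(K:ℝ)*r/b) * (b - (ν (ball xb (r - (3*r/8)/((n:ℝ)+1)))).toReal) := by
      refine mul_le_mul_of_nonneg_left hη_le (by positivity)
    calc (⨍ y in ball xb r, |f y - c| ∂ν)
        ≤ (⨍ y in ball ((x : UniformSpace.Completion X)) s, |f y - cn| ∂ν) + (4*(K:ℝ)*r/b)*η :=
          hcomb
      _ ≤ L*s*(T / (ν (ball xb (L*r - ((2*L+1)*r/8)/((n:ℝ)+1)))).toReal)^(1/p)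
            + (4*(K:ℝ)*r/b)*η := by linarith [hmid]
      _ ≤ L*r*(T / (ν (ball xb (L*r - ((2*L+1)*r/8)/((n:ℝ)+1)))).toReal)^(1/p)
            + (4*(K:ℝ)*r/b) * (b - (ν (ball xb (r - (3*r/8)/((n:ℝ)+1)))).toReal) := by
          linarith [hLsLr, hηterm]
  -- pass to the limit in n
  have hdd_lim : Filter.Tendsto
      (fun n : ℕ => (ν (ball xb (L*r - ((2*L+1)*r/8)/((n:ℝ)+1)))).toReal)
      Filter.atTop (nhds DL) := by
    rw [hDL_def]
    exact tendsto_measure_ball_radii ν xb (by positivity) hBLfin.ne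
  have het_lim : Filter.Tendsto
      (fun n : ℕ => b - (ν (ball xb (r - (3*r/8)/((n:ℝ)+1)))).toReal)
      Filter.atTop (nhds 0) := by
    have h1 := tendsto_measure_ball_radii ν xb (show (0:ℝ) < 3*r/8 by positivity) hBfin.ne
    have h2 := (tendsto_const_nhds (x := b) (f := Filter.atTop (α := ℕ))).sub h1
    rw [hb_def] at h2 ⊢
    rw [sub_self] at h2
    exact h2
  have hΦlim : Filter.Tendsto (fun n : ℕ =>
      L*r*(T / (ν (ball xb (L*r - ((2*L+1)*r/8)/((n:ℝ)+1)))).toReal)^(1/p)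
        + (4*(K:ℝ)*r/b) * (b - (ν (ball xb (r - (3*r/8)/((n:ℝ)+1)))).toReal))
      Filter.atTop (nhds (L*r*(T/DL)^(1/p) + (4*(K:ℝ)*r/b) * 0)) := by
    refine Filter.Tendsto.add ?_ (Filter.Tendsto.const_mul _ het_lim)
    refine Filter.Tendsto.const_mul _ ?_
    have hdiv : Filter.Tendsto
        (fun n : ℕ => T / (ν (ball xb (L*r - ((2*L+1)*r/8)/((n:ℝ)+1)))).toReal)
        Filter.atTop (nhds (T/DL)) :=
      Filter.Tendsto.div tendsto_const_nhds hdd_lim hDLpos.ne'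
    exact ((Real.continuousAt_rpow_const _ _ (Or.inr (by positivity))).tendsto).comp hdiv
  have hfinal : (⨍ y in ball xb r, |f y - c| ∂ν) ≤ L*r*(T/DL)^(1/p) + (4*(K:ℝ)*r/b) * 0 :=
    ge_of_tendsto hΦlim (Filter.Eventually.of_forall key)
  have hrhs : L * r * (⨍ z in ball xb (L*r), lipLow f z ^ p ∂ν) ^ (1/p)
      = L*r*(T/DL)^(1/p) := by
    rw [MeasureTheory.setAverage_eq, smul_eq_mul, measureReal_def, ← hT_def, ← hDL_def]
    congr 1
    rw [div_eq_inv_mul T DL]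
  rw [mul_zero, add_zero] at hfinal
  rw [hrhs]
  exact hfinal
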